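/- Let $I\subseteq\mathbb{R}$ be an interval and let $P$ be a real polynomial of degree $N$ whose complex zeros have real parts contained in a finite set $Z$. Then $I$ can be decomposed into at most $C(N,\#Z)$ subintervals $I_j$ such that on each $I_j$ there exist $a_j\in Z$, an integer $0\le k_j\le N$, and a constant $C_j>0$ with $|P(t)|\sim C_j|t-a_j|^{k_j}$ and $\mathrm{dist}(t,Z)=|t-a_j|$ for all $t\in I_j$, with implicit constants depending only on $N$. -/

import Mathlib

open Polynomial

private lemma msProdAbs (s : Multiset ℂ) : ‖s.prod‖ = (s.map (‖·‖)).prod := by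
  induction s using Multiset.induction with
  | empty => simp
  | cons a s ih => simp [norm_mul, ih]

private lemma msProdMono (s : Multiset ℂ) (f g : ℂ → ℝ)
    (h : ∀ a ∈ s, 0 ≤ f a ∧ f a ≤ g a) : (s.map f).prod ≤ (s.map g).prod := by
  induction s using Multiset.induction with
  | empty => simp
  | cons a s ih =>
    simp only [Multiset.map_cons, Multiset.prod_cons]
    have h1 := h a (Multiset.mem_cons_self a s)
    have h2 : ∀ b ∈ s, 0 ≤ f b ∧ f b ≤ g b := fun b hb => h b (Multiset.mem_cons_of_mem hb)
    have hf : 0 ≤ (Multiset.map f s).prod :=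
      Multiset.prod_nonneg (by
        intro x hx; obtain ⟨b, hb, rfl⟩ := Multiset.mem_map.mp hx; exact (h2 b hb).1)
    exact mul_le_mul h1.2 (ih h2) hf (le_trans h1.1 h1.2)

private lemma msProdSmul (s : Multiset ℂ) (c : ℝ) (g : ℂ → ℝ) :
    (s.map (fun z => c * g z)).prod = c ^ Multiset.card s * (s.map g).prod := by
  induction s using Multiset.induction with
  | empty => simp
  | cons a s ih => simp [ih, pow_succ]; ring

private lemma msProdConst (s : Multiset ℂ) (c : ℝ) :
    (s.map (fun _ => c)).prod = c ^ Multiset.card s := by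
  induction s using Multiset.induction with
  | empty => simp
  | cons a s ih => simp [ih, pow_succ]; ring

private lemma evalAbsFactor (P : Polynomial ℝ) (t : ℝ) :
    |P.eval t| = |P.leadingCoeff| *
      (((P.map (algebraMap ℝ ℂ)).roots).map (fun z => ‖(t : ℂ) - z‖)).prod := by
  set Q := P.map (algebraMap ℝ ℂ) with hQdef
  have h1 : Q = C Q.leadingCoeff * (Q.roots.map fun a => X - C a).prod :=
    Splits.eq_prod_roots (IsAlgClosed.splits Q)
  have h2 : Q.eval (t : ℂ) = Q.leadingCoeff * (Q.roots.map fun a => (t : ℂ) - a).prod := by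
    conv_lhs => rw [h1]
    rw [eval_mul, eval_C, eval_multiset_prod, Multiset.map_map]
    congr 2
    apply Multiset.map_congr rfl
    intro z _
    simp
  have h3 : Q.eval (t : ℂ) = ((P.eval t : ℝ) : ℂ) := by
    rw [hQdef, Polynomial.eval_map]
    have : ((t:ℝ):ℂ) = algebraMap ℝ ℂ t := rfl
    rw [this, Polynomial.eval₂_at_apply]
    rfl
  have h4 : Q.leadingCoeff = ((P.leadingCoeff : ℝ) : ℂ) := by
    rw [hQdef]; exact leadingCoeff_map _
  have := congrArg (‖·‖) h2
  rw [h3, h4, norm_mul, Complex.norm_real, Complex.norm_real, Real.norm_eq_abs, Real.norm_eq_abs, msProdAbs,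
    Multiset.map_map] at this
  exact this

private lemma cellMid {a z x y t : ℝ} (hx : |x - a| ≤ |x - z|) (hy : |y - a| ≤ |y - z|)
    (h1 : x ≤ t) (h2 : t ≤ y) : |t - a| ≤ |t - z| := by
  have hx2 : (x - a) * (x - a) ≤ (x - z) * (x - z) := by
    have := mul_self_le_mul_self (abs_nonneg _) hx
    rwa [abs_mul_abs_self, abs_mul_abs_self] at this
  have hy2 : (y - a) * (y - a) ≤ (y - z) * (y - z) := by
    have := mul_self_le_mul_self (abs_nonneg _) hy
    rwa [abs_mul_abs_self, abs_mul_abs_self] at this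
  by_contra hcon
  push_neg at hcon
  have ht2 : (t - z) * (t - z) < (t - a) * (t - a) := by
    have := mul_self_lt_mul_self (abs_nonneg _) hcon
    rwa [abs_mul_abs_self, abs_mul_abs_self] at this
  have key : (y - t) * ((x - z) * (x - z) - (x - a) * (x - a)) +
      (t - x) * ((y - z) * (y - z) - (y - a) * (y - a)) =
      (y - x) * ((t - z) * (t - z) - (t - a) * (t - a)) := by ring
  rcases eq_or_lt_of_le (h1.trans h2) with heq | hlt
  · have htx : t = x := le_antisymm (heq ▸ h2) h1
    subst htx
    linarith
  · nlinarith [mul_nonneg (sub_nonneg.mpr h2) (sub_nonneg.mpr hx2),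
      mul_nonneg (sub_nonneg.mpr h1) (sub_nonneg.mpr hy2), key,
      mul_pos (sub_pos.mpr hlt) (sub_pos.mpr ht2)]

theorem stmt12 (N m : ℕ) :
    ∃ (K : ℕ) (c₁ c₂ : ℝ), 0 < c₁ ∧ 0 < c₂ ∧
      ∀ P : Polynomial ℝ, P ≠ 0 → P.natDegree ≤ N →
      ∀ Z : Finset ℝ, Z.Nonempty → Z.card = m →
        (∀ z : ℂ, (P.map (algebraMap ℝ ℂ)).IsRoot z → z.re ∈ Z) →
      ∀ I : Set ℝ, I.OrdConnected →
        ∃ (n : ℕ) (J : Fin n → Set ℝ), n ≤ K ∧ (I = ⋃ j, J j) ∧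
          ∀ j : Fin n, J j ⊆ I ∧ (J j).OrdConnected ∧
            ∃ a ∈ Z, ∃ k ≤ N, ∃ Cj : ℝ, 0 < Cj ∧
              ∀ t ∈ J j,
                c₁ * Cj * |t - a| ^ k ≤ |P.eval t| ∧
                |P.eval t| ≤ c₂ * Cj * |t - a| ^ k ∧
                ∀ z ∈ Z, |t - a| ≤ |t - z| := by
  classical
  refine ⟨2 * m * (m * N + 1), (1/4 : ℝ) ^ N, 2 ^ N, by positivity, by positivity, ?_⟩
  intro P hP hdeg Z hZne hZcard hroots I hI
  set Q := P.map (algebraMap ℝ ℂ) with hQdef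
  have hQ0 : Q ≠ 0 := by
    rw [hQdef]
    exact (Polynomial.map_ne_zero_iff (algebraMap ℝ ℂ).injective).mpr hP
  set R := Q.roots with hRdef
  have hRcard : Multiset.card R ≤ N := by
    have h1 := Polynomial.card_roots' Q
    rw [hQdef, Polynomial.natDegree_map] at h1
    exact le_trans h1 hdeg
  have hlc : (0:ℝ) < |P.leadingCoeff| := abs_pos.mpr (leadingCoeff_ne_zero.mpr hP)
  set e : ℝ → ℂ → ℝ := fun a z => |a - z.re| + |z.im| with he
  set V : Finset ℝ := insert 0 ((Z ×ˢ R.toFinset).image (fun p => e p.1 p.2)) with hVdef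
  have hV0 : (0:ℝ) ∈ V := Finset.mem_insert_self _ _
  have hVnonneg : ∀ w ∈ V, (0:ℝ) ≤ w := by
    intro w hw
    rcases Finset.mem_insert.mp hw with h | h
    · exact le_of_eq h.symm
    · obtain ⟨q, _, rfl⟩ := Finset.mem_image.mp h
      simp only [he]
      positivity
  have hVmem : ∀ a ∈ Z, ∀ z ∈ R, e a z ∈ V := by
    intro a ha z hz
    exact Finset.mem_insert_of_mem (Finset.mem_image.mpr ⟨(a, z),
      Finset.mem_product.mpr ⟨ha, Multiset.mem_toFinset.mpr hz⟩, rfl⟩)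
  have hVcard : V.card ≤ m * N + 1 := by
    have h1 : R.toFinset.card ≤ N := le_trans (Multiset.toFinset_card_le R) hRcard
    calc V.card ≤ ((Z ×ˢ R.toFinset).image (fun p => e p.1 p.2)).card + 1 :=
          Finset.card_insert_le _ _
      _ ≤ (Z ×ˢ R.toFinset).card + 1 := Nat.add_le_add_right Finset.card_image_le 1
      _ = Z.card * R.toFinset.card + 1 := by rw [Finset.card_product]
      _ ≤ m * N + 1 := by
          rw [hZcard]
          exact Nat.add_le_add_right (Nat.mul_le_mul_left m h1) 1
  set S : Finset (ℝ × ℝ × Bool) := Z ×ˢ V ×ˢ (Finset.univ : Finset Bool) with hSdef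
  have hScard : S.card ≤ 2 * m * (m * N + 1) := by
    have h2 : S.card = Z.card * (V.card * 2) := by
      rw [hSdef, Finset.card_product, Finset.card_product]
      simp
    rw [h2, hZcard]
    calc m * (V.card * 2) ≤ m * ((m * N + 1) * 2) :=
          Nat.mul_le_mul_left m (Nat.mul_le_mul_right 2 hVcard)
      _ = 2 * m * (m * N + 1) := by ring
  set Jf : ℝ × ℝ × Bool → Set ℝ := fun p =>
    {t | t ∈ I ∧ (∀ z ∈ Z, |t - p.1| ≤ |t - z|) ∧ p.2.1 ≤ |t - p.1| ∧
      (∀ w ∈ V, p.2.1 < w → |t - p.1| ≤ w) ∧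
      (p.2.2 = true → p.1 ≤ t) ∧ (p.2.2 = false → t ≤ p.1)} with hJfdef
  refine ⟨S.card, fun j => Jf ((S.equivFin.symm j) : ℝ × ℝ × Bool), hScard, ?_, ?_⟩
  · -- covering
    apply Set.eq_of_subset_of_subset
    · intro t ht
      obtain ⟨a, haZ, hamin⟩ := Finset.exists_min_image Z (fun z => |t - z|) hZne
      have hu0 : (0:ℝ) ≤ |t - a| := abs_nonneg _
      have hFne : (V.filter (fun w => w ≤ |t - a|)).Nonempty :=
        ⟨0, Finset.mem_filter.mpr ⟨hV0, hu0⟩⟩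
      set v := (V.filter (fun w => w ≤ |t - a|)).max' hFne with hvdef
      have hvF := Finset.max'_mem _ hFne
      have hvV : v ∈ V := (Finset.mem_filter.mp hvF).1
      have hvu : v ≤ |t - a| := (Finset.mem_filter.mp hvF).2
      have hband : ∀ w ∈ V, v < w → |t - a| ≤ w := by
        intro w hw hvw
        by_contra hc
        push_neg at hc
        exact absurd (Finset.le_max' (V.filter (fun w => w ≤ |t - a|)) w
            (Finset.mem_filter.mpr ⟨hw, le_of_lt hc⟩))
          (not_le.mpr hvw)
      rcases le_total a t with hat | hta
      · have hpS : (a, v, true) ∈ S := by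
          rw [hSdef]
          exact Finset.mem_product.mpr ⟨haZ,
            Finset.mem_product.mpr ⟨hvV, Finset.mem_univ _⟩⟩
        refine Set.mem_iUnion.mpr ⟨S.equivFin ⟨(a, v, true), hpS⟩, ?_⟩
        simp only [Equiv.symm_apply_apply]
        exact ⟨ht, hamin, hvu, hband, fun _ => hat, fun h => absurd h (by simp)⟩
      · have hpS : (a, v, false) ∈ S := by
          rw [hSdef]
          exact Finset.mem_product.mpr ⟨haZ,
            Finset.mem_product.mpr ⟨hvV, Finset.mem_univ _⟩⟩
        refine Set.mem_iUnion.mpr ⟨S.equivFin ⟨(a, v, false), hpS⟩, ?_⟩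
        simp only [Equiv.symm_apply_apply]
        exact ⟨ht, hamin, hvu, hband, fun h => absurd h (by simp), fun _ => hta⟩
    · intro t ht
      obtain ⟨j, hj⟩ := Set.mem_iUnion.mp ht
      exact hj.1
  · -- per-interval properties
    intro j
    have hpS : ((S.equivFin.symm j) : ℝ × ℝ × Bool) ∈ S := (S.equivFin.symm j).2
    rcases hsplit : ((S.equivFin.symm j) : ℝ × ℝ × Bool) with ⟨a, v, b⟩
    rw [hsplit] at hpS
    rw [hSdef] at hpS
    obtain ⟨haZ, hrest⟩ := Finset.mem_product.mp hpS
    obtain ⟨hvV, -⟩ := Finset.mem_product.mp hrest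
    have hv0 : (0:ℝ) ≤ v := hVnonneg v hvV
    simp only [hsplit]
    have hkdef : Multiset.card (R.filter (fun z => e a z ≤ v)) ≤ N :=
      le_trans (Multiset.card_le_card (Multiset.filter_le _ R)) hRcard
    refine ⟨fun t ht => ht.1, ?_, a, haZ,
      Multiset.card (R.filter (fun z => e a z ≤ v)), hkdef,
      |P.leadingCoeff| * ((R.filter (fun z => ¬ e a z ≤ v)).map (e a)).prod, ?_, ?_⟩
    · -- OrdConnected
      refine ⟨fun x hx y hy t ht => ?_⟩
      obtain ⟨hxI, hxcell, hxlow, hxband, hxT, hxF⟩ := hx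
      obtain ⟨hyI, hycell, hylow, hyband, hyT, hyF⟩ := hy
      obtain ⟨ht1, ht2⟩ := ht
      refine ⟨hI.out hxI hyI ⟨ht1, ht2⟩,
        fun z hz => cellMid (hxcell z hz) (hycell z hz) ht1 ht2, ?_, ?_, ?_, ?_⟩
      · cases b with
        | true =>
          have hax : a ≤ x := hxT rfl
          have h1 : |x - a| = x - a := abs_of_nonneg (by linarith)
          have h2 : |t - a| = t - a := abs_of_nonneg (by linarith)
          rw [h2]; rw [h1] at hxlow; linarith
        | false =>
          have hya : y ≤ a := hyF rfl
          have h1 : |y - a| = a - y := by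
            rw [abs_sub_comm]; exact abs_of_nonneg (by linarith)
          have h2 : |t - a| = a - t := by
            rw [abs_sub_comm]; exact abs_of_nonneg (by linarith)
          rw [h2]; rw [h1] at hylow; linarith
      · intro w hw hvw
        cases b with
        | true =>
          have hax : a ≤ x := hxT rfl
          have h1 : |y - a| = y - a := abs_of_nonneg (by linarith)
          have h2 : |t - a| = t - a := abs_of_nonneg (by linarith)
          have := hyband w hw hvw
          rw [h1] at this; rw [h2]; linarith
        | false =>
          have hya : y ≤ a := hyF rfl
          have h1 : |x - a| = a - x := by
            rw [abs_sub_comm]; exact abs_of_nonneg (by linarith)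
          have h2 : |t - a| = a - t := by
            rw [abs_sub_comm]; exact abs_of_nonneg (by linarith)
          have := hxband w hw hvw
          rw [h1] at this; rw [h2]; linarith
      · intro hb
        subst hb
        exact le_trans (hxT rfl) ht1
      · intro hb
        subst hb
        exact le_trans ht2 (hyF rfl)
    · -- positivity of Cj
      refine mul_pos hlc (Multiset.prod_pos ?_)
      intro x hx
      obtain ⟨z, hz, rfl⟩ := Multiset.mem_map.mp hx
      have h1 : ¬ e a z ≤ v := (Multiset.mem_filter.mp hz).2
      exact lt_of_le_of_lt hv0 (not_le.mp h1)
    · -- main estimate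
      intro t ht
      obtain ⟨htI, hcell, hlow, hband, -, -⟩ := ht
      set g : ℂ → ℝ := fun z => if e a z ≤ v then |t - a| else e a z with hg
      have perRoot : ∀ z ∈ R, (0 ≤ (1/4 : ℝ) * g z) ∧
          ((1/4 : ℝ) * g z ≤ ‖(t:ℂ) - z‖) ∧
          (‖(t:ℂ) - z‖ ≤ 2 * g z) := by
        intro z hz
        have hzroot : Q.IsRoot z := (Polynomial.mem_roots'.mp (hRdef ▸ hz)).2
        have hre : z.re ∈ Z := hroots z hzroot
        have h3 : |t - a| ≤ |t - z.re| := hcell z.re hre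
        have h4 : |a - z.re| ≤ |a - t| + |t - z.re| := abs_sub_le a t z.re
        have hat : |a - t| = |t - a| := abs_sub_comm a t
        have hAre : |((t:ℂ) - z).re| ≤ ‖(t:ℂ) - z‖ := Complex.abs_re_le_norm _
        have hAim : |((t:ℂ) - z).im| ≤ ‖(t:ℂ) - z‖ := Complex.abs_im_le_norm _
        have hsum : ‖(t:ℂ) - z‖ ≤ |((t:ℂ) - z).re| + |((t:ℂ) - z).im| :=
          Complex.norm_le_abs_re_add_abs_im _
        have hrecomp : ((t:ℂ) - z).re = t - z.re := by simp
        have himcomp : |((t:ℂ) - z).im| = |z.im| := by simp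
        rw [hrecomp] at hAre hsum
        rw [himcomp] at hAim hsum
        have htz : |t - z.re| ≤ |t - a| + |a - z.re| := abs_sub_le t a z.re
        have hlower : |t - a| + e a z ≤ 4 * ‖(t:ℂ) - z‖ := by
          simp only [he]; rw [hat] at h4; linarith
        have hupper : ‖(t:ℂ) - z‖ ≤ |t - a| + e a z := by
          simp only [he]; linarith
        have hu0 : (0:ℝ) ≤ |t - a| := abs_nonneg _
        have he0 : (0:ℝ) ≤ e a z := by simp only [he]; positivity
        by_cases hcase : e a z ≤ v
        · have heu : e a z ≤ |t - a| := le_trans hcase hlow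
          simp only [hg, if_pos hcase]
          refine ⟨by positivity, by linarith, by linarith⟩
        · have hue : |t - a| ≤ e a z := hband (e a z) (hVmem a haZ z hz) (not_le.mp hcase)
          simp only [hg, if_neg hcase]
          refine ⟨by positivity, by linarith, by linarith⟩
      have habsnn : ∀ z ∈ R, (0:ℝ) ≤ (1/4 : ℝ) * g z ∧
          (1/4 : ℝ) * g z ≤ ‖(t:ℂ) - z‖ := fun z hz =>
        ⟨(perRoot z hz).1, (perRoot z hz).2.1⟩
      have hProdLow : ((R.map (fun z => (1/4 : ℝ) * g z)).prod) ≤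
          (R.map (fun z => ‖(t:ℂ) - z‖)).prod :=
        msProdMono R _ _ habsnn
      have hProdHigh : (R.map (fun z => ‖(t:ℂ) - z‖)).prod ≤
          (R.map (fun z => 2 * g z)).prod :=
        msProdMono R _ _ (fun z hz => ⟨norm_nonneg _, (perRoot z hz).2.2⟩)
      rw [msProdSmul] at hProdLow hProdHigh
      have hgsplit : (R.map g).prod =
          |t - a| ^ (Multiset.card (R.filter (fun z => e a z ≤ v))) *
          ((R.filter (fun z => ¬ e a z ≤ v)).map (e a)).prod := by
        have hfilter : R.filter (fun z => e a z ≤ v) + R.filter (fun z => ¬ e a z ≤ v) = R :=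
          Multiset.filter_add_not _ R
        calc (R.map g).prod
            = ((R.filter (fun z => e a z ≤ v) + R.filter (fun z => ¬ e a z ≤ v)).map g).prod := by
              rw [hfilter]
          _ = ((R.filter (fun z => e a z ≤ v)).map g).prod *
              ((R.filter (fun z => ¬ e a z ≤ v)).map g).prod := by
              rw [Multiset.map_add, Multiset.prod_add]
          _ = _ := by
              have hsmall : (R.filter (fun z => e a z ≤ v)).map g =
                  (R.filter (fun z => e a z ≤ v)).map (fun _ => |t - a|) :=
                Multiset.map_congr rfl (fun z hz => by
                  simp only [hg]; exact if_pos ((Multiset.mem_filter.mp hz).2))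
              have hbig : (R.filter (fun z => ¬ e a z ≤ v)).map g =
                  (R.filter (fun z => ¬ e a z ≤ v)).map (e a) :=
                Multiset.map_congr rfl (fun z hz => by
                  simp only [hg]; exact if_neg ((Multiset.mem_filter.mp hz).2))
              rw [hsmall, hbig, msProdConst]
      rw [hgsplit] at hProdLow hProdHigh
      have heval := evalAbsFactor P t
      rw [← hQdef, ← hRdef] at heval
      have hU0 : (0:ℝ) ≤ |t - a| ^ (Multiset.card (R.filter (fun z => e a z ≤ v))) :=
        pow_nonneg (abs_nonneg _) _
      have hB0 : (0:ℝ) ≤ ((R.filter (fun z => ¬ e a z ≤ v)).map (e a)).prod := by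
        apply Multiset.prod_nonneg
        intro x hx
        obtain ⟨z, hz, rfl⟩ := Multiset.mem_map.mp hx
        exact le_trans hv0 (le_of_lt (not_le.mp ((Multiset.mem_filter.mp hz).2)))
      have hpowlow : ((1:ℝ)/4) ^ N ≤ (1/4 : ℝ) ^ (Multiset.card R) :=
        pow_le_pow_of_le_one (by norm_num) (by norm_num) hRcard
      have hpowhigh : (2:ℝ) ^ (Multiset.card R) ≤ 2 ^ N :=
        pow_le_pow_right₀ (by norm_num) hRcard
      refine ⟨?_, ?_, fun z hz => hcell z hz⟩
      · rw [heval]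
        calc (1/4 : ℝ) ^ N *
              (|P.leadingCoeff| * ((R.filter (fun z => ¬ e a z ≤ v)).map (e a)).prod) *
              |t - a| ^ (Multiset.card (R.filter (fun z => e a z ≤ v)))
            = ((1/4 : ℝ) ^ N * (|t - a| ^ (Multiset.card (R.filter (fun z => e a z ≤ v))) *
                ((R.filter (fun z => ¬ e a z ≤ v)).map (e a)).prod)) * |P.leadingCoeff| := by
              ring
          _ ≤ ((1/4 : ℝ) ^ (Multiset.card R) *
                (|t - a| ^ (Multiset.card (R.filter (fun z => e a z ≤ v))) *
                ((R.filter (fun z => ¬ e a z ≤ v)).map (e a)).prod)) * |P.leadingCoeff| := by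
              apply mul_le_mul_of_nonneg_right _ (abs_nonneg _)
              exact mul_le_mul_of_nonneg_right hpowlow (mul_nonneg hU0 hB0)
          _ ≤ ((R.map (fun z => ‖(t:ℂ) - z‖)).prod) * |P.leadingCoeff| :=
              mul_le_mul_of_nonneg_right hProdLow (abs_nonneg _)
          _ = |P.leadingCoeff| * (R.map (fun z => ‖(t:ℂ) - z‖)).prod := by
              ring
      · rw [heval]
        calc |P.leadingCoeff| * (R.map (fun z => ‖(t:ℂ) - z‖)).prod
            ≤ |P.leadingCoeff| * ((2:ℝ) ^ (Multiset.card R) *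
                (|t - a| ^ (Multiset.card (R.filter (fun z => e a z ≤ v))) *
                ((R.filter (fun z => ¬ e a z ≤ v)).map (e a)).prod)) :=
              mul_le_mul_of_nonneg_left hProdHigh (abs_nonneg _)
          _ ≤ |P.leadingCoeff| * ((2:ℝ) ^ N *
                (|t - a| ^ (Multiset.card (R.filter (fun z => e a z ≤ v))) *
                ((R.filter (fun z => ¬ e a z ≤ v)).map (e a)).prod)) := by
              apply mul_le_mul_of_nonneg_left _ (abs_nonneg _)
              exact mul_le_mul_of_nonneg_right hpowhigh (mul_nonneg hU0 hB0)
          _ = 2 ^ N * (|P.leadingCoeff| * ((R.filter (fun z => ¬ e a z ≤ v)).map (e a)).prod) *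
              |t - a| ^ (Multiset.card (R.filter (fun z => e a z ≤ v))) := by
              ring
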